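/- Let a, b, P > 0, let n1 ≥ n2 ≥ 1 be natural numbers with p := n2/n1, and let x ∈ ℝ^{n1} satisfy Σ_{i=1}^{n1} x_i² = n1·P. Let Z = (Z₁,…,Z_{n1}) be i.i.d. standard Gaussian random variables, and define ĩ := Σ_{i=1}^{n2} ℓ_{a,P}(x_i, Z_i) + Σ_{i=n2+1}^{n1} ℓ_{b,P}(x_i, Z_i). Then Var[(1/n1)·ĩ] = (1/n1)·(1/4)·( (p·2a²P² + 4aP)/(1 + aP)² + (1 − p)·2b²P²/(1 + bP)² ) + (1/n1²)·( b/(1 + bP)² − a/(1 + aP)² )·Σ_{i=n2+1}^{n1} x_i². -/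

import Mathlib

open MeasureTheory ProbabilityTheory

/-- Density of the centered Gaussian with standard deviation `σ`. -/
noncomputable def gaussDensity (σ y : ℝ) : ℝ :=
  (1 / (σ * Real.sqrt (2 * Real.pi))) * Real.exp (-(y ^ 2) / (2 * σ ^ 2))

/-- Single-letter modified information density of the Gaussian channel
`Y = √g·X + Z` with reference output distribution `N(0, 1+gP)`. -/
noncomputable def infoDensity1 (g P x z : ℝ) : ℝ :=
  Real.log (gaussDensity 1 z) -
    Real.log (gaussDensity (Real.sqrt (1 + g * P)) (Real.sqrt g * x + z))

namespace VarAux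

open Real
open scoped ENNReal NNReal

/-! ### The information density is an explicit quadratic in `z` -/

lemma infoDensity1_eq {g P : ℝ} (hg : 0 < g) (hP : 0 < P) (x z : ℝ) :
    infoDensity1 g P x z =
      (Real.log (Real.sqrt (1 + g * P)) + g * x ^ 2 / (2 * (1 + g * P)))
        + (Real.sqrt g * x / (1 + g * P)) * z
        + (-(g * P) / (2 * (1 + g * P))) * z ^ 2 := by
  have hK : (0:ℝ) < 1 + g * P := by positivity
  have hσ : (0:ℝ) < Real.sqrt (1 + g * P) := Real.sqrt_pos.mpr hK
  have hσsq : Real.sqrt (1 + g * P) ^ 2 = 1 + g * P := Real.sq_sqrt hK.le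
  have hs2π : (0:ℝ) < Real.sqrt (2 * π) := Real.sqrt_pos.mpr (by positivity)
  have hlog : ∀ σ y : ℝ, 0 < σ → Real.log (gaussDensity σ y)
      = -(Real.log σ + Real.log (Real.sqrt (2 * π))) + (-(y ^ 2) / (2 * σ ^ 2)) := by
    intro σ y hσ'
    rw [gaussDensity, Real.log_mul (by positivity) (Real.exp_ne_zero _), Real.log_exp,
      one_div, Real.log_inv, Real.log_mul hσ'.ne' hs2π.ne']
  rw [infoDensity1, hlog 1 z one_pos, hlog _ _ hσ]
  have hsg : Real.sqrt g ^ 2 = g := Real.sq_sqrt hg.le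
  have hexp : (Real.sqrt g * x + z) ^ 2 = g * x ^ 2 + 2 * Real.sqrt g * x * z + z ^ 2 := by
    ring_nf
    nlinarith [hsg]
  rw [hexp, hσsq]
  rw [Real.log_one]
  field_simp
  ring

/-! ### Gaussian moments -/

lemma gm_integral (f : ℝ → ℝ) :
    ∫ t, f t ∂(gaussianReal 0 1)
      = (Real.sqrt (2 * π))⁻¹ * ∫ t, f t * Real.exp (-(1/2) * t ^ 2) := by
  have hpdf : ∀ t : ℝ, gaussianPDFReal 0 1 t
      = (Real.sqrt (2 * π))⁻¹ * Real.exp (-(1/2) * t ^ 2) := by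
    intro t
    rw [gaussianPDFReal]
    simp only [NNReal.coe_one, mul_one, sub_zero]
    congr 1
    ring
  have hmeas : Measurable fun t : ℝ => (gaussianPDFReal 0 1 t).toNNReal :=
    (measurable_gaussianPDFReal 0 1).real_toNNReal
  rw [gaussianReal_of_var_ne_zero 0 one_ne_zero]
  have : gaussianPDF 0 1 = fun t => ((gaussianPDFReal 0 1 t).toNNReal : ℝ≥0∞) := rfl
  rw [this, integral_withDensity_eq_integral_smul hmeas f]
  rw [← integral_const_mul]
  congr 1
  funext t
  rw [NNReal.smul_def, smul_eq_mul, Real.coe_toNNReal _ (gaussianPDFReal_nonneg 0 1 t), hpdf t]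
  ring

lemma gm_integrable_iff (f : ℝ → ℝ) :
    Integrable f (gaussianReal 0 1)
      ↔ Integrable (fun t => f t * Real.exp (-(1/2) * t ^ 2)) := by
  have hpdf : ∀ t : ℝ, gaussianPDFReal 0 1 t
      = (Real.sqrt (2 * π))⁻¹ * Real.exp (-(1/2) * t ^ 2) := by
    intro t
    rw [gaussianPDFReal]
    simp only [NNReal.coe_one, mul_one, sub_zero]
    congr 1
    ring
  have hmeas : Measurable fun t : ℝ => (gaussianPDFReal 0 1 t).toNNReal :=
    (measurable_gaussianPDFReal 0 1).real_toNNReal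
  have hs2π : (0:ℝ) < Real.sqrt (2 * π) := Real.sqrt_pos.mpr (by positivity)
  rw [gaussianReal_of_var_ne_zero 0 one_ne_zero]
  have h1 : gaussianPDF 0 1 = fun t => ((gaussianPDFReal 0 1 t).toNNReal : ℝ≥0∞) := rfl
  rw [h1, integrable_withDensity_iff_integrable_smul hmeas]
  have h2 : (fun t => (gaussianPDFReal 0 1 t).toNNReal • f t)
      = fun t => (Real.sqrt (2 * π))⁻¹ * (f t * Real.exp (-(1/2) * t ^ 2)) := by
    funext t
    rw [NNReal.smul_def, smul_eq_mul, Real.coe_toNNReal _ (gaussianPDFReal_nonneg 0 1 t), hpdf t]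
    ring
  rw [h2, integrable_const_mul_iff (isUnit_iff_ne_zero.mpr (inv_ne_zero hs2π.ne'))]

lemma Jint (k : ℕ) :
    Integrable (fun t : ℝ => t ^ k * Real.exp (-(1/2) * t ^ 2)) := by
  have h := integrable_rpow_mul_exp_neg_mul_sq (b := 1/2) (by norm_num) (s := (k:ℝ))
    (lt_of_lt_of_le (by norm_num) (Nat.cast_nonneg k))
  simpa [Real.rpow_natCast] using h

lemma J0 : ∫ t : ℝ, Real.exp (-(1/2) * t ^ 2) = Real.sqrt (2 * π) := by
  rw [integral_gaussian, show π / (1/2 : ℝ) = 2 * π by ring]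

lemma J_odd (k : ℕ) (hk : Odd k) :
    ∫ t : ℝ, t ^ k * Real.exp (-(1/2) * t ^ 2) = 0 := by
  have h := MeasureTheory.integral_neg_eq_self
    (fun t : ℝ => t ^ k * Real.exp (-(1/2) * t ^ 2)) volume
  simp only [hk.neg_pow, neg_sq, neg_mul] at h
  rw [integral_neg] at h
  simp only [neg_mul] at h ⊢
  linarith

lemma J_Ioi (k : ℕ) :
    ∫ t in Set.Ioi (0:ℝ), t ^ k * Real.exp (-(1/2) * t ^ 2)
      = (1/2 : ℝ) ^ (-((k:ℝ) + 1) / 2) * (1/2) * Real.Gamma (((k:ℝ) + 1) / 2) := by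
  have h2 : ∀ t : ℝ, t ^ ((2:ℕ):ℝ) = t ^ 2 := fun t => Real.rpow_natCast t 2
  calc ∫ t in Set.Ioi (0:ℝ), t ^ k * Real.exp (-(1/2) * t ^ 2)
      = ∫ t in Set.Ioi (0:ℝ), t ^ ((k:ℝ)) * Real.exp (-(1/2) * t ^ (2:ℝ)) := by
        refine setIntegral_congr_fun measurableSet_Ioi (fun t ht => ?_)
        rw [Real.rpow_natCast]
        congr 2
        rw [show (2:ℝ) = ((2:ℕ):ℝ) by norm_num, h2]
    _ = (1/2 : ℝ) ^ (-((k:ℝ) + 1) / 2) * (1/2) * Real.Gamma (((k:ℝ) + 1) / 2) := by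
        have := integral_rpow_mul_exp_neg_mul_rpow (p := 2) (q := (k:ℝ)) (b := 1/2)
          (by norm_num) (lt_of_lt_of_le (by norm_num) (Nat.cast_nonneg k)) (by norm_num)
        simpa using this

lemma J_even (k : ℕ) (hk : Even k) :
    ∫ t : ℝ, t ^ k * Real.exp (-(1/2) * t ^ 2)
      = 2 * ∫ t in Set.Ioi (0:ℝ), t ^ k * Real.exp (-(1/2) * t ^ 2) := by
  have hi := Jint k
  rw [← intervalIntegral.integral_Iic_add_Ioi (b := (0:ℝ)) hi.integrableOn hi.integrableOn]
  have h : ∫ t in Set.Iic (0:ℝ), t ^ k * Real.exp (-(1/2) * t ^ 2)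
      = ∫ t in Set.Ioi (0:ℝ), t ^ k * Real.exp (-(1/2) * t ^ 2) := by
    have h1 := integral_comp_neg_Ioi (0:ℝ) (fun t => t ^ k * Real.exp (-(1/2) * t ^ 2))
    rw [neg_zero] at h1
    rw [← h1]
    refine setIntegral_congr_fun measurableSet_Ioi (fun t ht => ?_)
    simp only [hk.neg_pow, neg_sq]
  rw [h]
  ring

lemma sqrt_two_pi : Real.sqrt (2 * π) = Real.sqrt 2 * Real.sqrt π :=
  Real.sqrt_mul (by norm_num) π

lemma rpow_half_pow (m : ℕ) : (2:ℝ) ^ ((m:ℝ) + 1/2) = 2 ^ m * Real.sqrt 2 := by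
  rw [Real.rpow_add two_pos, Real.rpow_natCast, Real.sqrt_eq_rpow]

lemma half_rpow (y : ℝ) : ((1:ℝ)/2) ^ (-y) = (2:ℝ) ^ y := by
  rw [one_div, Real.inv_rpow (by norm_num : (0:ℝ) ≤ 2),
    Real.rpow_neg (by norm_num : (0:ℝ) ≤ 2), inv_inv]

lemma J2 : ∫ t : ℝ, t ^ 2 * Real.exp (-(1/2) * t ^ 2) = Real.sqrt (2 * π) := by
  rw [J_even 2 (by decide), J_Ioi 2]
  have h1 : ((1:ℝ)/2) ^ (-(((2:ℕ):ℝ) + 1) / 2) = 2 * Real.sqrt 2 := by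
    rw [show (-(((2:ℕ):ℝ) + 1) / 2) = -(((1:ℕ):ℝ) + 1/2) by push_cast; ring,
      half_rpow, rpow_half_pow 1, pow_one]
  have h2 : Real.Gamma ((((2:ℕ):ℝ) + 1) / 2) = Real.sqrt π / 2 := by
    rw [show ((((2:ℕ):ℝ) + 1) / 2) = 1/2 + 1 by push_cast; ring,
      Real.Gamma_add_one (by norm_num), Real.Gamma_one_half_eq]
    ring
  rw [h1, h2, sqrt_two_pi]
  ring

lemma J4 : ∫ t : ℝ, t ^ 4 * Real.exp (-(1/2) * t ^ 2) = 3 * Real.sqrt (2 * π) := by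
  rw [J_even 4 (by decide), J_Ioi 4]
  have h1 : ((1:ℝ)/2) ^ (-(((4:ℕ):ℝ) + 1) / 2) = 4 * Real.sqrt 2 := by
    rw [show (-(((4:ℕ):ℝ) + 1) / 2) = -(((2:ℕ):ℝ) + 1/2) by push_cast; ring,
      half_rpow, rpow_half_pow 2]
    norm_num
  have h2 : Real.Gamma ((((4:ℕ):ℝ) + 1) / 2) = 3/4 * Real.sqrt π := by
    rw [show ((((4:ℕ):ℝ) + 1) / 2) = (3/2 : ℝ) + 1 by push_cast; ring,
      Real.Gamma_add_one (by norm_num), show (3/2 : ℝ) = 1/2 + 1 by norm_num,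
      Real.Gamma_add_one (by norm_num), Real.Gamma_one_half_eq]
    ring
  rw [h1, h2, sqrt_two_pi]
  ring

/-- Integral and integrability of a degree-4 polynomial against the standard Gaussian. -/
lemma gm_poly (c0 c1 c2 c3 c4 : ℝ) :
    Integrable (fun t : ℝ => c0 + c1 * t + c2 * t ^ 2 + c3 * t ^ 3 + c4 * t ^ 4)
        (gaussianReal 0 1) ∧
      ∫ t, (c0 + c1 * t + c2 * t ^ 2 + c3 * t ^ 3 + c4 * t ^ 4) ∂(gaussianReal 0 1)
        = c0 + c2 + 3 * c4 := by
  have hs2π : (0:ℝ) < Real.sqrt (2 * π) := Real.sqrt_pos.mpr (by positivity)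
  have hdec : (fun t : ℝ => (c0 + c1 * t + c2 * t ^ 2 + c3 * t ^ 3 + c4 * t ^ 4)
        * Real.exp (-(1/2) * t ^ 2))
      = fun t => c0 * (t ^ 0 * Real.exp (-(1/2) * t ^ 2))
          + c1 * (t ^ 1 * Real.exp (-(1/2) * t ^ 2))
          + c2 * (t ^ 2 * Real.exp (-(1/2) * t ^ 2))
          + c3 * (t ^ 3 * Real.exp (-(1/2) * t ^ 2))
          + c4 * (t ^ 4 * Real.exp (-(1/2) * t ^ 2)) := by
    funext t; ring
  have i0 : Integrable (fun t : ℝ => c0 * (t ^ 0 * Real.exp (-(1/2) * t ^ 2))) :=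
    (Jint 0).const_mul c0
  have i1 : Integrable (fun t : ℝ => c1 * (t ^ 1 * Real.exp (-(1/2) * t ^ 2))) :=
    (Jint 1).const_mul c1
  have i2 : Integrable (fun t : ℝ => c2 * (t ^ 2 * Real.exp (-(1/2) * t ^ 2))) :=
    (Jint 2).const_mul c2
  have i3 : Integrable (fun t : ℝ => c3 * (t ^ 3 * Real.exp (-(1/2) * t ^ 2))) :=
    (Jint 3).const_mul c3
  have i4 : Integrable (fun t : ℝ => c4 * (t ^ 4 * Real.exp (-(1/2) * t ^ 2))) :=
    (Jint 4).const_mul c4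
  have i01 : Integrable (fun t : ℝ => c0 * (t ^ 0 * Real.exp (-(1/2) * t ^ 2))
      + c1 * (t ^ 1 * Real.exp (-(1/2) * t ^ 2))) := i0.add i1
  have i012 : Integrable (fun t : ℝ => c0 * (t ^ 0 * Real.exp (-(1/2) * t ^ 2))
      + c1 * (t ^ 1 * Real.exp (-(1/2) * t ^ 2))
      + c2 * (t ^ 2 * Real.exp (-(1/2) * t ^ 2))) := i01.add i2
  have i0123 : Integrable (fun t : ℝ => c0 * (t ^ 0 * Real.exp (-(1/2) * t ^ 2))
      + c1 * (t ^ 1 * Real.exp (-(1/2) * t ^ 2))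
      + c2 * (t ^ 2 * Real.exp (-(1/2) * t ^ 2))
      + c3 * (t ^ 3 * Real.exp (-(1/2) * t ^ 2))) := i012.add i3
  have hint : Integrable (fun t : ℝ => (c0 + c1 * t + c2 * t ^ 2 + c3 * t ^ 3 + c4 * t ^ 4)
      * Real.exp (-(1/2) * t ^ 2)) := by
    rw [hdec]
    exact i0123.add i4
  constructor
  · exact (gm_integrable_iff _).mpr hint
  · rw [gm_integral, hdec]
    rw [integral_add i0123 i4, integral_add i012 i3, integral_add i01 i2,
      integral_add i0 i1]
    simp only [integral_const_mul]
    have h0 : ∫ t : ℝ, t ^ 0 * Real.exp (-(1/2) * t ^ 2) = Real.sqrt (2 * π) := by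
      simpa using J0
    rw [h0, J_odd 1 (by decide), J2, J_odd 3 (by decide), J4]
    field_simp
    ring

/-! ### Fubini for products over `Measure.pi` with a general probability measure -/

variable {μ : Measure ℝ} [IsProbabilityMeasure μ]

theorem integrable_pi_prod : ∀ {n : ℕ} (f : Fin n → ℝ → ℝ),
    (∀ i, Integrable (f i) μ) →
    Integrable (fun z : Fin n → ℝ => ∏ i, f i (z i)) (Measure.pi fun _ => μ) := by
  intro n
  induction n with
  | zero =>
      intro f hf
      simp only [Finset.univ_eq_empty, Finset.prod_empty]
      exact integrable_const 1
  | succ n ih =>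
      intro f hf
      have hmp := (measurePreserving_piFinSuccAbove (fun _ : Fin (n+1) => μ) 0).symm
      rw [← hmp.integrable_comp_emb (MeasurableEquiv.measurableEmbedding _)]
      simp_rw [MeasurableEquiv.piFinSuccAbove_symm_apply, Fin.insertNthEquiv,
        Fin.prod_univ_succ, Fin.insertNth_zero]
      simp only [Fin.zero_succAbove, cast_eq, Function.comp_def, Fin.cons_zero, Fin.cons_succ]
      have h2 : Integrable (fun (x : Fin n → ℝ) => ∏ j, f (Fin.succ j) (x j))
          (Measure.pi fun _ => μ) := ih _ (fun i => hf _)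
      exact Integrable.mul_prod (hf 0) h2

theorem integral_pi_prod : ∀ {n : ℕ} (f : Fin n → ℝ → ℝ),
    ∫ z : Fin n → ℝ, ∏ i, f i (z i) ∂(Measure.pi fun _ => μ) = ∏ i, ∫ t, f i t ∂μ := by
  intro n
  induction n with
  | zero =>
      intro f
      rw [show (fun z : Fin 0 → ℝ => ∏ i, f i (z i)) = fun _ => (1:ℝ) from
        funext fun z => by simp]
      simp
  | succ n ih =>
      intro f
      calc ∫ z : Fin (n+1) → ℝ, ∏ i, f i (z i) ∂(Measure.pi fun _ => μ)
          = ∫ p : ℝ × (Fin n → ℝ), f 0 p.1 * ∏ i : Fin n, f (Fin.succ i) (p.2 i)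
              ∂(μ.prod (Measure.pi fun _ => μ)) := by
            rw [← ((measurePreserving_piFinSuccAbove (fun _ : Fin (n+1) => μ) 0).symm).integral_comp']
            simp only [MeasurableEquiv.piFinSuccAbove_symm_apply, Fin.insertNthEquiv,
              Fin.prod_univ_succ, Fin.insertNth_zero, Equiv.coe_fn_mk,
              Fin.zero_succAbove, cast_eq, Fin.cons_zero, Fin.cons_succ]
        _ = (∫ t, f 0 t ∂μ) * ∏ i : Fin n, ∫ t, f (Fin.succ i) t ∂μ := by
            have h := MeasureTheory.integral_prod_mul (μ := μ)
              (ν := Measure.pi fun _ : Fin n => μ) (f := fun t => f 0 t)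
              (g := fun w : Fin n → ℝ => ∏ i : Fin n, f (Fin.succ i) (w i))
            rw [ih (fun i => f (Fin.succ i))] at h
            exact h
        _ = ∏ i, ∫ t, f i t ∂μ := (Fin.prod_univ_succ (fun i => ∫ t, f i t ∂μ)).symm

/-! ### Variance of a sum of coordinatewise functions under a product measure -/

theorem variance_pi_sum_fn {n : ℕ} (Q : Fin n → ℝ → ℝ) (hmeas : ∀ i, Measurable (Q i))
    (hint : ∀ i, Integrable (Q i) μ)
    (hint2 : ∀ i, Integrable (fun t => Q i t * Q i t) μ) :
    variance (fun z : Fin n → ℝ => ∑ i, Q i (z i)) (Measure.pi fun _ => μ)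
      = ∑ i, ((∫ t, Q i t * Q i t ∂μ) - (∫ t, Q i t ∂μ) ^ 2) := by
  set π' : Measure (Fin n → ℝ) := Measure.pi fun _ => μ with hπ'
  -- single-coordinate lemma
  have single : ∀ (g : ℝ → ℝ), Integrable g μ → ∀ i : Fin n,
      Integrable (fun z : Fin n → ℝ => g (z i)) π' ∧
      ∫ z, g (z i) ∂π' = ∫ t, g t ∂μ := by
    intro g hg i
    have hfe : (fun z : Fin n → ℝ => g (z i))
        = fun z => ∏ k, (if k = i then g else fun _ => (1:ℝ)) (z k) := by
      funext z
      rw [Finset.prod_eq_single i (fun k _ hk => by simp [hk]) (by simp)]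
      simp
    constructor
    · rw [hfe]
      refine integrable_pi_prod _ (fun k => ?_)
      by_cases hk : k = i
      · subst hk; simpa using hg
      · simp only [hk, if_false]; exact integrable_const 1
    · rw [hfe, integral_pi_prod]
      rw [Finset.prod_eq_single i (fun k _ hk => by simp [hk]) (by simp)]
      simp
  -- two-coordinate lemma
  have pair : ∀ i j : Fin n, i ≠ j →
      Integrable (fun z : Fin n → ℝ => Q i (z i) * Q j (z j)) π' ∧
      ∫ z, Q i (z i) * Q j (z j) ∂π' = (∫ t, Q i t ∂μ) * ∫ t, Q j t ∂μ := by
    intro i j hij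
    set W : Fin n → ℝ → ℝ :=
      fun k => if k = i then Q i else if k = j then Q j else fun _ => 1 with hW
    have key : ∀ (u : Fin n → ℝ), (∀ k, k ≠ i → k ≠ j → u k = 1) →
        ∏ k, u k = u i * u j := by
      intro u hu
      rw [← Finset.mul_prod_erase Finset.univ u (Finset.mem_univ i),
        ← Finset.mul_prod_erase _ u
          (show j ∈ Finset.univ.erase i by simp [Ne.symm hij]),
        Finset.prod_eq_one (fun k hk => by
          simp only [Finset.mem_erase] at hk
          exact hu k hk.2.1 hk.1)]
      ring
    have hWi : W i = Q i := by simp [hW]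
    have hWj : W j = Q j := by simp [hW, Ne.symm hij]
    have hWo : ∀ k, k ≠ i → k ≠ j → W k = fun _ => (1:ℝ) := by
      intro k h1 h2; simp [hW, h1, h2]
    have hWint : ∀ k, Integrable (W k) μ := by
      intro k
      by_cases h1 : k = i
      · rw [h1, hWi]; exact hint i
      · by_cases h2 : k = j
        · rw [h2, hWj]; exact hint j
        · rw [hWo k h1 h2]; exact integrable_const 1
    have hfe : (fun z : Fin n → ℝ => Q i (z i) * Q j (z j))
        = fun z => ∏ k, W k (z k) := by
      funext z
      rw [key (fun k => W k (z k)) (fun k h1 h2 => by simp only [hWo k h1 h2]), hWi, hWj]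
    constructor
    · rw [hfe]; exact integrable_pi_prod _ hWint
    · rw [hfe, integral_pi_prod,
        key (fun k => ∫ t, W k t ∂μ) (fun k h1 h2 => by simp only [hWo k h1 h2]; simp),
        hWi, hWj]
  set F : (Fin n → ℝ) → ℝ := fun z => ∑ i, Q i (z i) with hF
  set m : Fin n → ℝ := fun i => ∫ t, Q i t ∂μ with hm
  set s : Fin n → ℝ := fun i => ∫ t, Q i t * Q i t ∂μ with hs
  have hFmeas : Measurable F :=
    Finset.measurable_sum Finset.univ (fun i _ => (hmeas i).comp (measurable_pi_apply i))
  have hterm : ∀ i j : Fin n, Integrable (fun z => Q i (z i) * Q j (z j)) π' := by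
    intro i j
    by_cases h : i = j
    · subst h; exact (single (fun t => Q i t * Q i t) (hint2 i) i).1
    · exact (pair i j h).1
  have htermval : ∀ i j : Fin n,
      ∫ z, Q i (z i) * Q j (z j) ∂π' = if i = j then s i else m i * m j := by
    intro i j
    by_cases h : i = j
    · subst h; rw [if_pos rfl]; exact (single (fun t => Q i t * Q i t) (hint2 i) i).2
    · rw [if_neg h]; exact (pair i j h).2
  have hFsq_fun : (fun z => F z ^ 2) = fun z => ∑ i, ∑ j, Q i (z i) * Q j (z j) := by
    funext z
    rw [hF, sq, Finset.sum_mul_sum]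
  have hFsqint : Integrable (fun z => F z ^ 2) π' := by
    rw [hFsq_fun]
    exact integrable_finset_sum _ (fun i _ => integrable_finset_sum _ (fun j _ => hterm i j))
  have hmem : MemLp F 2 π' :=
    (memLp_two_iff_integrable_sq hFmeas.aestronglyMeasurable).mpr hFsqint
  rw [variance_eq_sub hmem]
  have hEF : ∫ z, F z ∂π' = ∑ i, m i := by
    rw [hF, integral_finset_sum _ (fun i _ => (single _ (hint i) i).1)]
    exact Finset.sum_congr rfl (fun i _ => (single _ (hint i) i).2)
  have hEF2 : ∫ z, F z ^ 2 ∂π' = ∑ i, ∑ j, (if i = j then s i else m i * m j) := by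
    rw [hFsq_fun, integral_finset_sum _ (fun i _ => integrable_finset_sum _
      (fun j _ => hterm i j))]
    refine Finset.sum_congr rfl (fun i _ => ?_)
    rw [integral_finset_sum _ (fun j _ => hterm i j)]
    exact Finset.sum_congr rfl (fun j _ => htermval i j)
  have h1 : (∫ z, (F ^ 2) z ∂π') = ∫ z, F z ^ 2 ∂π' := by
    congr 1
  have h2 : (∫ z, F z ∂π') = ∑ i, m i := hEF
  rw [h1, hEF2, h2]
  have h3 : ∀ i : Fin n, ∑ j, (if i = j then s i else m i * m j)
      = (∑ j, m i * m j) + (s i - m i * m i) := by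
    intro i
    have : ∀ j : Fin n, (if i = j then s i else m i * m j)
        = m i * m j + (if i = j then s i - m i * m i else 0) := by
      intro j
      by_cases h : i = j
      · subst h; simp
      · simp [h]
    rw [Finset.sum_congr rfl (fun j _ => this j), Finset.sum_add_distrib,
      Finset.sum_ite_eq Finset.univ i (fun _ => s i - m i * m i)]
    simp
  rw [Finset.sum_congr rfl (fun i _ => h3 i), Finset.sum_add_distrib]
  have h4 : (∑ i, m i) ^ 2 = ∑ i, ∑ j, m i * m j := by
    rw [sq, Finset.sum_mul_sum]
  rw [h4]
  have h5 : ∀ i : Fin n, s i - m i * m i = s i - m i ^ 2 := fun i => by ring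
  rw [Finset.sum_congr rfl (fun i _ => h5 i)]
  ring

/-- Variance of a sum of coordinatewise quadratics under the standard Gaussian product. -/
theorem variance_pi_quad {n : ℕ} (C A B : Fin n → ℝ) :
    variance (fun z : Fin n → ℝ => ∑ i, (C i + A i * z i + B i * (z i) ^ 2))
      (Measure.pi fun _ => gaussianReal 0 1) = ∑ i, ((A i) ^ 2 + 2 * (B i) ^ 2) := by
  have hq : ∀ i : Fin n, (fun t : ℝ => C i + A i * t + B i * t ^ 2)
      = fun t => C i + A i * t + B i * t ^ 2 + 0 * t ^ 3 + 0 * t ^ 4 := by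
    intro i; funext t; ring
  have hq2 : ∀ i : Fin n, (fun t : ℝ => (C i + A i * t + B i * t ^ 2)
        * (C i + A i * t + B i * t ^ 2))
      = fun t => C i ^ 2 + (2 * C i * A i) * t + (A i ^ 2 + 2 * C i * B i) * t ^ 2
          + (2 * A i * B i) * t ^ 3 + B i ^ 2 * t ^ 4 := by
    intro i; funext t; ring
  have hint : ∀ i : Fin n, Integrable (fun t : ℝ => C i + A i * t + B i * t ^ 2)
      (gaussianReal 0 1) := by
    intro i; rw [hq i]; exact (gm_poly (C i) (A i) (B i) 0 0).1
  have hint2 : ∀ i : Fin n, Integrable (fun t : ℝ => (C i + A i * t + B i * t ^ 2)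
      * (C i + A i * t + B i * t ^ 2)) (gaussianReal 0 1) := by
    intro i; rw [hq2 i]
    exact (gm_poly (C i ^ 2) (2 * C i * A i) (A i ^ 2 + 2 * C i * B i)
      (2 * A i * B i) (B i ^ 2)).1
  have hmeas : ∀ i : Fin n, Measurable (fun t : ℝ => C i + A i * t + B i * t ^ 2) := by
    intro i
    exact (measurable_const.add ((measurable_id.const_mul (A i)))).add
      ((measurable_id.pow_const 2).const_mul (B i))
  rw [variance_pi_sum_fn _ hmeas hint hint2]
  refine Finset.sum_congr rfl (fun i _ => ?_)
  have e1 : ∫ t, (C i + A i * t + B i * t ^ 2) * (C i + A i * t + B i * t ^ 2)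
      ∂(gaussianReal 0 1)
      = C i ^ 2 + (A i ^ 2 + 2 * C i * B i) + 3 * B i ^ 2 := by
    rw [hq2 i]
    exact (gm_poly (C i ^ 2) (2 * C i * A i) (A i ^ 2 + 2 * C i * B i)
      (2 * A i * B i) (B i ^ 2)).2
  have e2 : ∫ t, (C i + A i * t + B i * t ^ 2) ∂(gaussianReal 0 1) = C i + B i := by
    rw [show (fun t : ℝ => C i + A i * t + B i * t ^ 2)
      = fun t => C i + A i * t + B i * t ^ 2 + 0 * t ^ 3 + 0 * t ^ 4 from funext fun t => by ring]
    simpa using (gm_poly (C i) (A i) (B i) 0 0).2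
  rw [e1, e2]
  ring

end VarAux

/-- Variance of the normalized heterogeneous-blocklength modified information
density for a codeword `x` on the power shell `‖x‖² = n1·P`: the constants
`V_{ρ,1}` and `V_{ρ,2}` of the Sato-type outer bound. -/
theorem variance_hetero_info_density (a b P : ℝ) (ha : 0 < a) (hb : 0 < b)
    (hP : 0 < P) (n1 n2 : ℕ) (hn2 : 1 ≤ n2) (hn : n2 ≤ n1)
    (x : Fin n1 → ℝ) (hx : ∑ i, x i ^ 2 = n1 * P) :
    variance
      (fun z : Fin n1 → ℝ =>
        (1 / (n1 : ℝ)) *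
          ∑ i : Fin n1,
            (if (i : ℕ) < n2 then infoDensity1 a P (x i) (z i)
             else infoDensity1 b P (x i) (z i)))
      (Measure.pi fun _ : Fin n1 => gaussianReal 0 1) =
      (1 / (n1 : ℝ)) * (1 / 4 *
          (((n2 : ℝ) / n1 * (2 * a ^ 2 * P ^ 2) + 4 * a * P) / (1 + a * P) ^ 2 +
            (1 - (n2 : ℝ) / n1) * (2 * b ^ 2 * P ^ 2) / (1 + b * P) ^ 2)) +
        (1 / (n1 : ℝ) ^ 2) * (b / (1 + b * P) ^ 2 - a / (1 + a * P) ^ 2) *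
          ∑ i : Fin n1, if n2 ≤ (i : ℕ) then x i ^ 2 else 0 := by
  classical
  have hKa : (0:ℝ) < 1 + a * P := by positivity
  have hKb : (0:ℝ) < 1 + b * P := by positivity
  have hn1 : (0:ℝ) < (n1:ℝ) := by
    have : 1 ≤ n1 := le_trans hn2 hn
    exact_mod_cast Nat.lt_of_lt_of_le Nat.zero_lt_one this
  set CC : Fin n1 → ℝ := fun i => if (i:ℕ) < n2
    then Real.log (Real.sqrt (1 + a * P)) + a * (x i) ^ 2 / (2 * (1 + a * P))
    else Real.log (Real.sqrt (1 + b * P)) + b * (x i) ^ 2 / (2 * (1 + b * P)) with hCC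
  set AA : Fin n1 → ℝ := fun i => if (i:ℕ) < n2
    then Real.sqrt a * x i / (1 + a * P)
    else Real.sqrt b * x i / (1 + b * P) with hAA
  set BB : Fin n1 → ℝ := fun i => if (i:ℕ) < n2
    then -(a * P) / (2 * (1 + a * P))
    else -(b * P) / (2 * (1 + b * P)) with hBB
  have hfun : (fun z : Fin n1 → ℝ =>
        (1 / (n1 : ℝ)) * ∑ i : Fin n1,
          (if (i : ℕ) < n2 then infoDensity1 a P (x i) (z i)
           else infoDensity1 b P (x i) (z i)))
      = fun z : Fin n1 → ℝ =>
        (1 / (n1 : ℝ)) * ∑ i : Fin n1, (CC i + AA i * z i + BB i * (z i) ^ 2) := by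
    funext z
    congr 1
    refine Finset.sum_congr rfl (fun i _ => ?_)
    by_cases h : (i:ℕ) < n2
    · rw [if_pos h, hCC, hAA, hBB]
      simp only [h, if_true]
      exact VarAux.infoDensity1_eq ha hP (x i) (z i)
    · rw [if_neg h, hCC, hAA, hBB]
      simp only [h, if_false]
      exact VarAux.infoDensity1_eq hb hP (x i) (z i)
  rw [hfun, variance_const_mul, VarAux.variance_pi_quad]
  -- compute the per-coordinate variances
  have hAB : ∀ i : Fin n1, (AA i) ^ 2 + 2 * (BB i) ^ 2
      = (if (i:ℕ) < n2
          then a * (x i) ^ 2 / (1 + a * P) ^ 2 + a ^ 2 * P ^ 2 / (2 * (1 + a * P) ^ 2)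
          else b * (x i) ^ 2 / (1 + b * P) ^ 2 + b ^ 2 * P ^ 2 / (2 * (1 + b * P) ^ 2)) := by
    intro i
    by_cases h : (i:ℕ) < n2
    · rw [hAA, hBB]
      simp only [h, if_true]
      rw [div_pow, mul_pow, Real.sq_sqrt ha.le, div_pow]
      have h1 : (1 + a * P) ≠ 0 := hKa.ne'
      field_simp
    · rw [hAA, hBB]
      simp only [h, if_false]
      rw [div_pow, mul_pow, Real.sq_sqrt hb.le, div_pow]
      have h1 : (1 + b * P) ≠ 0 := hKb.ne'
      field_simp
  rw [Finset.sum_congr rfl (fun i _ => hAB i)]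
  -- split each term
  have hsplit : ∀ i : Fin n1,
      (if (i:ℕ) < n2
        then a * (x i) ^ 2 / (1 + a * P) ^ 2 + a ^ 2 * P ^ 2 / (2 * (1 + a * P) ^ 2)
        else b * (x i) ^ 2 / (1 + b * P) ^ 2 + b ^ 2 * P ^ 2 / (2 * (1 + b * P) ^ 2))
      = a / (1 + a * P) ^ 2 * (x i) ^ 2
        + (if (i:ℕ) < n2 then a ^ 2 * P ^ 2 / (2 * (1 + a * P) ^ 2)
            else b ^ 2 * P ^ 2 / (2 * (1 + b * P) ^ 2))
        + (b / (1 + b * P) ^ 2 - a / (1 + a * P) ^ 2)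
          * (if n2 ≤ (i:ℕ) then (x i) ^ 2 else 0) := by
    intro i
    by_cases h : (i:ℕ) < n2
    · rw [if_pos h, if_pos h, if_neg (by omega)]
      ring
    · rw [if_neg h, if_neg h, if_pos (by omega)]
      field_simp
      ring
  rw [Finset.sum_congr rfl (fun i _ => hsplit i)]
  rw [Finset.sum_add_distrib, Finset.sum_add_distrib]
  rw [← Finset.mul_sum, ← Finset.mul_sum, hx]
  -- count the `if` constants
  have hcount : (∑ i : Fin n1, (if (i:ℕ) < n2 then a ^ 2 * P ^ 2 / (2 * (1 + a * P) ^ 2)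
        else b ^ 2 * P ^ 2 / (2 * (1 + b * P) ^ 2)))
      = (n2:ℝ) * (a ^ 2 * P ^ 2 / (2 * (1 + a * P) ^ 2))
        + ((n1:ℝ) - (n2:ℝ)) * (b ^ 2 * P ^ 2 / (2 * (1 + b * P) ^ 2)) := by
    have hone : (∑ i : Fin n1, (if (i:ℕ) < n2 then (1:ℝ) else 0)) = (n2:ℝ) := by
      rw [Finset.sum_boole]
      norm_cast
      have : (Finset.univ.filter (fun i : Fin n1 => (i:ℕ) < n2)).card = n2 := by
        have he : (Finset.univ.filter (fun i : Fin n1 => (i:ℕ) < n2))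
            = Finset.map (Fin.castLEEmb hn) Finset.univ := by
          ext i
          simp only [Finset.mem_filter, Finset.mem_univ, true_and, Finset.mem_map]
          constructor
          · intro hi
            exact ⟨⟨(i:ℕ), hi⟩, Fin.ext rfl⟩
          · rintro ⟨j, rfl⟩
            exact j.isLt
        rw [he, Finset.card_map, Finset.card_univ, Fintype.card_fin]
      exact this
    calc (∑ i : Fin n1, (if (i:ℕ) < n2 then a ^ 2 * P ^ 2 / (2 * (1 + a * P) ^ 2)
          else b ^ 2 * P ^ 2 / (2 * (1 + b * P) ^ 2)))
        = ∑ i : Fin n1, (b ^ 2 * P ^ 2 / (2 * (1 + b * P) ^ 2)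
            + (a ^ 2 * P ^ 2 / (2 * (1 + a * P) ^ 2)
              - b ^ 2 * P ^ 2 / (2 * (1 + b * P) ^ 2)) * (if (i:ℕ) < n2 then (1:ℝ) else 0)) := by
          refine Finset.sum_congr rfl (fun i _ => ?_)
          by_cases h : (i:ℕ) < n2 <;> simp [h] <;> ring
      _ = (n1:ℝ) * (b ^ 2 * P ^ 2 / (2 * (1 + b * P) ^ 2))
            + (a ^ 2 * P ^ 2 / (2 * (1 + a * P) ^ 2)
              - b ^ 2 * P ^ 2 / (2 * (1 + b * P) ^ 2)) * (n2:ℝ) := by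
          rw [Finset.sum_add_distrib, Finset.sum_const, ← Finset.mul_sum, hone]
          simp [Finset.card_univ, mul_comm]
      _ = (n2:ℝ) * (a ^ 2 * P ^ 2 / (2 * (1 + a * P) ^ 2))
            + ((n1:ℝ) - (n2:ℝ)) * (b ^ 2 * P ^ 2 / (2 * (1 + b * P) ^ 2)) := by ring
  rw [hcount]
  have hS : ∀ S : ℝ, S = ∑ i : Fin n1, (if n2 ≤ (i:ℕ) then x i ^ 2 else 0) → True := fun _ _ => trivial
  set S : ℝ := ∑ i : Fin n1, (if n2 ≤ (i:ℕ) then x i ^ 2 else 0) with hSdef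
  field_simp
  ring
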